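/- Let p be a prime and R a Noetherian commutative ring of characteristic p whose Frobenius endomorphism r ↦ r^p is flat (for example, a regular ring). Fix e ≥ 1 and let 0 → M' →^ι M →^π M'' → 0 be a short exact sequence of R-modules equipped with φ-semilinear additive maps F' : M' → M', F : M → M, F'' : M'' → M'' satisfying ι ∘ F' = F ∘ ι and π ∘ F = F'' ∘ π. If (M',F') and (M'',F'') are finitely generated unit R[F^e]-modules, then (M,F) is a finitely generated unit R[F^e]-module. -/

import Mathlib

open TensorProduct

/-- A copy of `R` whose `R`-module structure is twisted by the ring endomorphism `φ`:
`r • r' = φ r * r'`.  For `φ` the `e`-th Frobenius iterate this is the bimodule `R^e`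
of Lyubeznik/Blickle, i.e. the left tensor factor of the Frobenius functor `F^{e*}`. -/
def Twisted (R : Type) [CommRing R] (φ : R →+* R) : Type := R

instance (R : Type) [CommRing R] (φ : R →+* R) : AddCommGroup (Twisted R φ) :=
  inferInstanceAs (AddCommGroup R)

instance (R : Type) [CommRing R] (φ : R →+* R) : Module R (Twisted R φ) :=
  Module.compHom R φ

/-- The element of the twisted copy of `R` corresponding to `r`. -/
def tw {R : Type} [CommRing R] (φ : R →+* R) (r : R) : Twisted R φ := r

/-- `R·F(N)` : the `R`-submodule of `M` generated by the image of `N` under `F`.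
`R·F^j(N)` is its `j`-fold iterate `(spanF F)^[j] N`. -/
def spanF {R M : Type} [CommRing R] [AddCommGroup M] [Module R M]
    (F : M → M) (N : Submodule R M) : Submodule R M :=
  Submodule.span R (F '' (N : Set M))

/-- `(M, F)` is a *unit* `R[Fᵉ]`-module: the linearization
`θ : R ⊗_φ M → M`, `r ⊗ m ↦ r • F m`, is bijective. -/
def IsUnitFModule {R M : Type} [CommRing R] [AddCommGroup M] [Module R M]
    (φ : R →+* R) (F : M → M) : Prop :=
  ∃ θ : Twisted R φ ⊗[R] M →+ M,
    (∀ (r : R) (m : M), θ (tw φ r ⊗ₜ[R] m) = r • F m) ∧ Function.Bijective θ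

/-- `(M, F)` is a finitely generated `R[Fᵉ]`-module: there is a finite subset
`S ⊆ M` such that the elements `F^[j] s`, `j ≥ 0`, `s ∈ S`, generate `M` as an
`R`-module. -/
def IsFGFModule (R : Type) {M : Type} [CommRing R] [AddCommGroup M] [Module R M]
    (F : M → M) : Prop :=
  ∃ S : Finset M, Submodule.span R (⋃ j : ℕ, F^[j] '' (S : Set M)) = ⊤

def untw {R : Type} [CommRing R] {φ : R →+* R} (x : Twisted R φ) : R := x

lemma twisted_smul {R : Type} [CommRing R] (φ : R →+* R) (r : R) (x : Twisted R φ) :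
    untw (r • x) = φ r * untw x := rfl

lemma twisted_flat {R : Type} [CommRing R] (φ : R →+* R) (h : φ.Flat) :
    Module.Flat R (Twisted R φ) := by
  letI : Algebra R R := φ.toAlgebra
  letI : Module R R := @Algebra.toModule R R _ _ φ.toAlgebra
  haveI h2 : @Module.Flat R R _ _ (@Algebra.toModule R R _ _ φ.toAlgebra) := h
  exact Module.Flat.of_linearEquiv (R := R) (M := R) (N := Twisted R φ)
    { toFun := untw, invFun := fun x => (x : Twisted R φ), map_add' := fun _ _ => rfl,
      map_smul' := fun r x => by
        rfl,
      left_inv := fun _ => rfl, right_inv := fun _ => rfl }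

lemma pow_flat {R : Type} [CommRing R] (φp : R →+* R) (h : φp.Flat) (n : ℕ) :
    (φp ^ n).Flat := by
  induction n with
  | zero => exact RingHom.Flat.id R
  | succ k ih =>
    rw [pow_succ', RingHom.mul_def]
    exact @RingHom.Flat.comp _ _ _ _ _ _ (φp ^ k) φp ih h

lemma phi_eq_pow {R : Type} [CommRing R] (p : ℕ) (φp φ : R →+* R)
    (hφp : ∀ r, φp r = r ^ p) (e : ℕ) (hφ : ∀ r, φ r = r ^ p ^ e) : φ = φp ^ e := by
  ext r
  rw [hφ]
  clear hφ
  induction e with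
  | zero => simp
  | succ k ih =>
    rw [pow_succ' φp k, RingHom.mul_def, RingHom.comp_apply, hφp, ← ih, ← pow_mul, ← pow_succ]

/-- Finitely generated unit `R[Fᵉ]`-modules are closed under
extensions: if in a short exact sequence `0 → M' → M → M'' → 0` compatible with the
Frobenius actions the two outer terms are finitely generated unit
`R[Fᵉ]`-modules, then so is the middle term. -/
theorem unit_fg_closed_under_extensions
    (p : ℕ) [Fact p.Prime]
    (R : Type) [CommRing R] [IsNoetherianRing R] [CharP R p]
    (φp : R →+* R) (hφp : ∀ r : R, φp r = r ^ p) (hflat : φp.Flat)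
    (e : ℕ) (he : 1 ≤ e)
    (φ : R →+* R) (hφ : ∀ r : R, φ r = r ^ p ^ e)
    (M' M M'' : Type)
    [AddCommGroup M'] [Module R M'] [AddCommGroup M] [Module R M]
    [AddCommGroup M''] [Module R M'']
    (ι : M' →ₗ[R] M) (π : M →ₗ[R] M'')
    (hinj : Function.Injective ι) (hsurj : Function.Surjective π)
    (hexact : Function.Exact ι π)
    (F' : M' → M') (F : M → M) (F'' : M'' → M'')
    (hadd' : ∀ x y : M', F' (x + y) = F' x + F' y)
    (hsl' : ∀ (r : R) (m : M'), F' (r • m) = r ^ p ^ e • F' m)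
    (hadd : ∀ x y : M, F (x + y) = F x + F y)
    (hsl : ∀ (r : R) (m : M), F (r • m) = r ^ p ^ e • F m)
    (hadd'' : ∀ x y : M'', F'' (x + y) = F'' x + F'' y)
    (hsl'' : ∀ (r : R) (m : M''), F'' (r • m) = r ^ p ^ e • F'' m)
    (hcommι : ∀ x : M', ι (F' x) = F (ι x))
    (hcommπ : ∀ x : M, π (F x) = F'' (π x))
    (hunit' : IsUnitFModule φ F') (hfg' : IsFGFModule R F')
    (hunit'' : IsUnitFModule φ F'') (hfg'' : IsFGFModule R F'') :
    IsUnitFModule φ F ∧ IsFGFModule R F := by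
  classical
  have hpe : p ^ e ≠ 0 := pow_ne_zero e (Fact.out : p.Prime).ne_zero
  have hF0 : F (0 : M) = 0 := by
    have h := hsl 0 0
    rw [smul_zero, zero_pow hpe, zero_smul] at h
    exact h
  haveI hTflat : Module.Flat R (Twisted R φ) :=
    twisted_flat φ (by rw [phi_eq_pow p φp φ hφp e hφ]; exact pow_flat φp hflat e)
  obtain ⟨θ', hθ'eq, hθ'bij⟩ := hunit'
  obtain ⟨θ'', hθ''eq, hθ''bij⟩ := hunit''
  -- the linearization θ for M
  let f0 : Twisted R φ →+ M →+ M :=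
  { toFun := fun r =>
    { toFun := fun m => untw r • F m
      map_zero' := by show untw r • F (0:M) = 0; rw [hF0, smul_zero]
      map_add' := fun a b => by show untw r • F (a+b) = untw r • F a + untw r • F b; rw [hadd, smul_add] }
    map_zero' := by ext m; exact zero_smul R (F m)
    map_add' := fun a b => by ext m; exact add_smul (untw a) (untw b) (F m) }
  have hbal : ∀ (r : R) (x : Twisted R φ) (m : M), f0 (r • x) m = f0 x (r • m) := by
    intro r x m
    show untw (r • x) • F m = untw x • F (r • m)
    rw [twisted_smul, hsl, hφ, mul_comm, mul_smul]
  let θ : Twisted R φ ⊗[R] M →+ M := TensorProduct.liftAddHom f0 hbal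
  have hθeq : ∀ (r : R) (m : M), θ (tw φ r ⊗ₜ[R] m) = r • F m := fun r m => rfl
  -- commuting squares
  have hsq1 : ∀ x : Twisted R φ ⊗[R] M',
      θ (LinearMap.lTensor (Twisted R φ) ι x) = ι (θ' x) := by
    intro x
    induction x using TensorProduct.induction_on with
    | zero => rw [map_zero, map_zero, map_zero, map_zero]
    | tmul r m =>
      rw [LinearMap.lTensor_tmul]
      show untw r • F (ι m) = ι (θ' (r ⊗ₜ m))
      rw [← hcommι, ← map_smul]
      congr 1
      exact (hθ'eq (untw r) m).symm
    | add a b ha hb => rw [map_add, map_add, map_add, map_add, ha, hb]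
  have hsq2 : ∀ x : Twisted R φ ⊗[R] M,
      θ'' (LinearMap.lTensor (Twisted R φ) π x) = π (θ x) := by
    intro x
    induction x using TensorProduct.induction_on with
    | zero => rw [map_zero, map_zero, map_zero, map_zero]
    | tmul r m =>
      rw [LinearMap.lTensor_tmul]
      show θ'' ((r : Twisted R φ) ⊗ₜ π m) = π (untw r • F m)
      rw [map_smul, hcommπ]
      exact hθ''eq (untw r) (π m)
    | add a b ha hb => rw [map_add, map_add, map_add, map_add, ha, hb]
  -- exactness of the tensored row
  have hι2 : Function.Injective (LinearMap.lTensor (Twisted R φ) ι) :=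
    Module.Flat.lTensor_preserves_injective_linearMap ι hinj
  have hπ2 : Function.Surjective (LinearMap.lTensor (Twisted R φ) π) :=
    LinearMap.lTensor_surjective _ hsurj
  have hex2 : Function.Exact (LinearMap.lTensor (Twisted R φ) ι)
      (LinearMap.lTensor (Twisted R φ) π) := lTensor_exact (Twisted R φ) hexact hsurj
  constructor
  · -- unit
    refine ⟨θ, hθeq, ?_, ?_⟩
    · -- injective
      intro x y hxy
      rw [← sub_eq_zero]
      set z := x - y with hz
      have hz0 : θ z = 0 := by rw [hz, map_sub, hxy, sub_self]
      have h1 : LinearMap.lTensor (Twisted R φ) π z = 0 := by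
        apply hθ''bij.injective
        rw [hsq2 z, hz0, map_zero, map_zero]
      obtain ⟨w, hw⟩ := (hex2 z).mp h1
      have hθ'w : θ' w = 0 := by
        apply hinj
        rw [← hsq1 w, hw, hz0, map_zero]
      have hw0 : w = 0 := hθ'bij.injective (by rw [hθ'w, map_zero])
      rw [← hw, hw0, map_zero]
    · -- surjective
      intro m
      obtain ⟨z, hzz⟩ := hθ''bij.surjective (π m)
      obtain ⟨x, hx⟩ := hπ2 z
      have h1 : π (m - θ x) = 0 := by
        rw [map_sub, ← hsq2 x, hx, hzz, sub_self]
      obtain ⟨m', hm'⟩ := (hexact (m - θ x)).mp h1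
      obtain ⟨w, hw⟩ := hθ'bij.surjective m'
      refine ⟨x + LinearMap.lTensor (Twisted R φ) ι w, ?_⟩
      rw [map_add, hsq1 w, hw, hm']
      abel
  · -- finitely generated
    obtain ⟨S', hS'⟩ := hfg'
    obtain ⟨S'', hS''⟩ := hfg''
    set g : M'' → M := Function.surjInv hsurj with hgdef
    have hg : ∀ x, π (g x) = x := Function.surjInv_eq hsurj
    refine ⟨S''.image g ∪ S'.image ι, ?_⟩
    set T : Finset M := S''.image g ∪ S'.image ι with hT
    set N := Submodule.span R (⋃ j : ℕ, F^[j] '' (T : Set M)) with hN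
    have hiterι : ∀ (j : ℕ) (x : M'), ι (F'^[j] x) = F^[j] (ι x) := by
      intro j
      induction j with
      | zero => intro x; rfl
      | succ k ih =>
        intro x
        rw [Function.iterate_succ_apply', Function.iterate_succ_apply', hcommι, ih]
    have hiterπ : ∀ (j : ℕ) (m : M), π (F^[j] m) = F''^[j] (π m) := by
      intro j
      induction j with
      | zero => intro m; rfl
      | succ k ih =>
        intro m
        rw [Function.iterate_succ_apply', Function.iterate_succ_apply', hcommπ, ih]
    have hι_le : LinearMap.range ι ≤ N := by
      rw [← Submodule.map_top, ← hS', Submodule.map_span]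
      apply Submodule.span_le.mpr
      rintro y ⟨x, hx, rfl⟩
      rw [Set.mem_iUnion] at hx
      obtain ⟨j, s, hs, rfl⟩ := hx
      apply Submodule.subset_span
      rw [Set.mem_iUnion]
      refine ⟨j, ι s, ?_, (hiterι j s).symm⟩
      rw [hT]
      push_cast
      exact Or.inr ⟨s, hs, rfl⟩
    have hπN : ∀ x : M'', ∃ n ∈ N, π n = x := by
      have hmap : Submodule.map π N = ⊤ := by
        apply le_antisymm le_top
        rw [← hS'']
        apply Submodule.span_le.mpr
        intro y hy
        rw [Set.mem_iUnion] at hy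
        obtain ⟨j, s, hs, rfl⟩ := hy
        refine ⟨F^[j] (g s), ?_, by rw [hiterπ, hg]⟩
        apply Submodule.subset_span
        rw [Set.mem_iUnion]
        refine ⟨j, g s, ?_, rfl⟩
        rw [hT]
        push_cast
        exact Or.inl ⟨s, hs, rfl⟩
      intro x
      have hx : x ∈ Submodule.map π N := by rw [hmap]; trivial
      obtain ⟨n, hn, hnx⟩ := hx
      exact ⟨n, hn, hnx⟩
    rw [eq_top_iff]
    intro m _
    obtain ⟨n, hn, hpn⟩ := hπN (π m)
    have h0 : π (m - n) = 0 := by rw [map_sub, hpn, sub_self]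
    obtain ⟨m', hm'⟩ := (hexact (m - n)).mp h0
    have hmn : m - n ∈ N := hι_le ⟨m', hm'⟩
    have := N.add_mem hmn hn
    simpa using this
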